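/- arXiv:1807.08773 — 2 statements merged into one kernel-verified Lean document; each statement's English description precedes it below -/
import Mathlib

section
/- There exist a 3-dimensional density matrix ρ = diag(0, 1/2, 1/2), a 3-dimensional density matrix ρ' = diag(1/6, 1/6, 2/3), a 2-dimensional density matrix σ = diag(2/3, 1/3), and a unitary U (a permutation matrix) on the 6-dimensional tensor product space such that tr₂[U(ρ ⊗ σ)U†] = ρ' and tr₁[U(ρ ⊗ σ)U†] = σ, while the min-entropy satisfies S_∞(ρ') < S_∞(ρ), where S_∞(τ) = −log λ_max(τ) with λ_max the largest eigenvalue. Hence correlating-catalytic state transitions can strictly decrease the Rényi-∞ entropy. -/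
open scoped Kronecker ComplexOrder
open Matrix

noncomputable section

/-- `ρ` is a density matrix: positive semidefinite with unit trace. -/
def IsDensityMatrix {ι : Type*} [Fintype ι] (ρ : Matrix ι ι ℂ) : Prop :=
  ρ.PosSemidef ∧ ρ.trace = 1

/-- Partial trace over the second tensor factor. -/
def ptrace2 {ι κ : Type*} [Fintype κ] (M : Matrix (ι × κ) (ι × κ) ℂ) : Matrix ι ι ℂ :=
  Matrix.of fun i j => ∑ k, M (i, k) (j, k)

/-- Partial trace over the first tensor factor. -/
def ptrace1 {ι κ : Type*} [Fintype ι] (M : Matrix (ι × κ) (ι × κ) ℂ) : Matrix κ κ ℂ :=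
  Matrix.of fun i j => ∑ k, M (k, i) (k, j)

/-- Dephasing (decoherence) channel in the fixed (standard) orthonormal basis `{|j⟩}`:
`D[σ] = ∑ j ⟨j|σ|j⟩ |j⟩⟨j|`. -/
def deph {ι : Type*} [DecidableEq ι] (M : Matrix ι ι ℂ) : Matrix ι ι ℂ :=
  Matrix.diagonal fun j => M j j

/-- The eigenvalue list of a matrix (junk value `0` if not Hermitian). -/
def eigs {ι : Type*} [Fintype ι] [DecidableEq ι] (ρ : Matrix ι ι ℂ) : ι → ℝ :=
  if h : ρ.IsHermitian then h.eigenvalues else 0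

/-- The spectrum of a matrix, as a multiset of real eigenvalues (with multiplicity). -/
def spectra {ι : Type*} [Fintype ι] [DecidableEq ι] (ρ : Matrix ι ι ℂ) : Multiset ℝ :=
  Finset.univ.val.map (eigs ρ)

/-- von Neumann entropy `S(ρ) = -tr(ρ log ρ)`, i.e. the Shannon entropy
of the eigenvalue list (natural logarithm). -/
def vN {ι : Type*} [Fintype ι] [DecidableEq ι] (ρ : Matrix ι ι ℂ) : ℝ :=
  ∑ i, Real.negMulLog (eigs ρ i)

/-- Maximally mixed state `𝟙_d = (1/d)·I_d`. -/
def mm (d : ℕ) : Matrix (Fin d) (Fin d) ℂ :=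
  (d : ℂ)⁻¹ • (1 : Matrix (Fin d) (Fin d) ℂ)

/-- The permutation matrix of a permutation `e`. -/
def permMat {ι : Type*} [Fintype ι] [DecidableEq ι] (e : Equiv.Perm ι) : Matrix ι ι ℂ :=
  Matrix.of fun i j => if i = e j then 1 else 0

/-- Rényi-∞ (min-)entropy: `S_∞(τ) = -log λ_max(τ)`. -/
def Sinf {ι : Type*} [Fintype ι] [DecidableEq ι] (τ : Matrix ι ι ℂ) : ℝ :=
  - Real.log (⨆ i, eigs τ i)

/- ### Auxiliary lemmas -/

lemma permMat_conj {ι : Type*} [Fintype ι] [DecidableEq ι] (e : Equiv.Perm ι) (d : ι → ℂ) :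
    permMat e * Matrix.diagonal d * (permMat e)ᴴ
      = Matrix.diagonal (fun i => d (e.symm i)) := by
  ext i j
  rw [Matrix.mul_apply, Finset.sum_eq_single (e.symm j)]
  · rw [Matrix.mul_apply, Finset.sum_eq_single (e.symm j)]
    · by_cases h : i = j <;>
        simp [permMat, Matrix.conjTranspose_apply, h, Equiv.eq_symm_apply]
    · intro k _ hk
      simp [Matrix.diagonal_apply_ne _ hk]
    · simp
  · intro l _ hl
    have : ¬ j = e l := fun h => hl (by simp [h])
    simp [permMat, Matrix.conjTranspose_apply, this]
  · simp

lemma sum_eigs_eq_trace {ι : Type*} [Fintype ι] [DecidableEq ι] {A : Matrix ι ι ℂ}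
    (hA : A.IsHermitian) : ∑ i, (hA.eigenvalues i : ℂ) = A.trace := by
  conv_rhs => rw [hA.spectral_theorem]
  rw [Unitary.conjStarAlgAut_apply, Matrix.trace_mul_cycle]
  have h1 : (star (hA.eigenvectorUnitary : Matrix ι ι ℂ)) *
      (hA.eigenvectorUnitary : Matrix ι ι ℂ) = 1 :=
    Unitary.coe_star_mul_self hA.eigenvectorUnitary
  rw [h1, Matrix.one_mul, Matrix.trace_diagonal]
  simp

lemma eigs_mem {ι : Type*} [Fintype ι] [DecidableEq ι] {A : Matrix ι ι ℂ}
    (hA : A.IsHermitian) (i : ι) : ((hA.eigenvalues i : ℂ)) ∈ spectrum ℂ A :=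
  spectrum.algebraMap_mem ℂ (hA.eigenvalues_mem_spectrum_real i)

/-- The explicit permutation on `Fin 3 × Fin 2`. -/
def e6 : Equiv.Perm (Fin 3 × Fin 2) where
  toFun p := ![![((0 : Fin 3), (1 : Fin 2)), (1, 1)], ![(2, 0), (0, 0)], ![(2, 1), (1, 0)]] p.1 p.2
  invFun p := ![![((1 : Fin 3), (1 : Fin 2)), (0, 0)], ![(2, 1), (0, 1)], ![(1, 0), (2, 0)]] p.1 p.2
  left_inv := by decide
  right_inv := by decide

/-- The concrete correlating-catalytic transition
`ρ = diag(0,1/2,1/2) → ρ' = diag(1/6,1/6,2/3)` with catalyst `σ = diag(2/3,1/3)` can be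
implemented by a permutation matrix, and it strictly decreases the Rényi-∞ entropy. -/
theorem stmt12 :
    IsDensityMatrix (Matrix.diagonal ![0, 1/2, 1/2] : Matrix (Fin 3) (Fin 3) ℂ) ∧
    IsDensityMatrix (Matrix.diagonal ![1/6, 1/6, 2/3] : Matrix (Fin 3) (Fin 3) ℂ) ∧
    IsDensityMatrix (Matrix.diagonal ![2/3, 1/3] : Matrix (Fin 2) (Fin 2) ℂ) ∧
    (∃ e : Equiv.Perm (Fin 3 × Fin 2),
      ptrace2 (permMat e *
          ((Matrix.diagonal ![0, 1/2, 1/2] : Matrix (Fin 3) (Fin 3) ℂ) ⊗ₖ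
            (Matrix.diagonal ![2/3, 1/3] : Matrix (Fin 2) (Fin 2) ℂ)) * (permMat e)ᴴ)
        = (Matrix.diagonal ![1/6, 1/6, 2/3] : Matrix (Fin 3) (Fin 3) ℂ) ∧
      ptrace1 (permMat e *
          ((Matrix.diagonal ![0, 1/2, 1/2] : Matrix (Fin 3) (Fin 3) ℂ) ⊗ₖ
            (Matrix.diagonal ![2/3, 1/3] : Matrix (Fin 2) (Fin 2) ℂ)) * (permMat e)ᴴ)
        = (Matrix.diagonal ![2/3, 1/3] : Matrix (Fin 2) (Fin 2) ℂ)) ∧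
    Sinf (Matrix.diagonal ![1/6, 1/6, 2/3] : Matrix (Fin 3) (Fin 3) ℂ)
      < Sinf (Matrix.diagonal ![0, 1/2, 1/2] : Matrix (Fin 3) (Fin 3) ℂ) := by
  refine ⟨⟨Matrix.PosSemidef.diagonal ?_, ?_⟩, ⟨Matrix.PosSemidef.diagonal ?_, ?_⟩,
    ⟨Matrix.PosSemidef.diagonal ?_, ?_⟩, ⟨e6, ?_, ?_⟩, ?_⟩
  · intro i; fin_cases i <;> norm_num [Complex.le_def]
  · simp [Matrix.trace_diagonal, Fin.sum_univ_three]; norm_num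
  · intro i; fin_cases i <;> norm_num [Complex.le_def]
  · simp [Matrix.trace_diagonal, Fin.sum_univ_three]; norm_num
  · intro i; fin_cases i <;> norm_num [Complex.le_def]
  · simp [Matrix.trace_diagonal, Fin.sum_univ_two]; norm_num
  · rw [Matrix.diagonal_kronecker_diagonal, permMat_conj]
    ext i j
    fin_cases i <;> fin_cases j <;>
      simp [ptrace2, Matrix.diagonal_apply, Fin.sum_univ_two, e6, Equiv.coe_fn_symm_mk] <;>
      norm_num
  · rw [Matrix.diagonal_kronecker_diagonal, permMat_conj]
    ext i j
    fin_cases i <;> fin_cases j <;>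
      simp [ptrace1, Matrix.diagonal_apply, Fin.sum_univ_three, e6, Equiv.coe_fn_symm_mk] <;>
      norm_num
  · have hA : (Matrix.diagonal ![1/6, 1/6, 2/3] : Matrix (Fin 3) (Fin 3) ℂ).IsHermitian :=
      (Matrix.PosSemidef.diagonal (by intro i; fin_cases i <;> norm_num [Complex.le_def])).1
    have hB : (Matrix.diagonal ![0, 1/2, 1/2] : Matrix (Fin 3) (Fin 3) ℂ).IsHermitian :=
      (Matrix.PosSemidef.diagonal (by intro i; fin_cases i <;> norm_num [Complex.le_def])).1
    have heA : eigs (Matrix.diagonal ![1/6, 1/6, 2/3] : Matrix (Fin 3) (Fin 3) ℂ)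
        = hA.eigenvalues := dif_pos hA
    have heB : eigs (Matrix.diagonal ![0, 1/2, 1/2] : Matrix (Fin 3) (Fin 3) ℂ)
        = hB.eigenvalues := dif_pos hB
    have hmA : ∀ i, eigs (Matrix.diagonal ![1/6, 1/6, 2/3] : Matrix (Fin 3) (Fin 3) ℂ) i = 1/6 ∨
        eigs (Matrix.diagonal ![1/6, 1/6, 2/3] : Matrix (Fin 3) (Fin 3) ℂ) i = 2/3 := by
      intro i
      have h := eigs_mem hA i
      rw [spectrum_diagonal] at h
      obtain ⟨j, hj⟩ := h
      rw [heA]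
      fin_cases j <;> [left; left; right] <;> rw [← Complex.ofReal_inj, ← hj] <;> norm_num
    have hmB : ∀ i, eigs (Matrix.diagonal ![0, 1/2, 1/2] : Matrix (Fin 3) (Fin 3) ℂ) i = 0 ∨
        eigs (Matrix.diagonal ![0, 1/2, 1/2] : Matrix (Fin 3) (Fin 3) ℂ) i = 1/2 := by
      intro i
      have h := eigs_mem hB i
      rw [spectrum_diagonal] at h
      obtain ⟨j, hj⟩ := h
      rw [heB]
      fin_cases j <;> [left; right; right] <;> rw [← Complex.ofReal_inj, ← hj] <;> norm_num
    have hsA : ∑ i, eigs (Matrix.diagonal ![1/6, 1/6, 2/3] : Matrix (Fin 3) (Fin 3) ℂ) i = 1 := by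
      have h := sum_eigs_eq_trace hA
      rw [show (Matrix.diagonal ![1/6, 1/6, 2/3] : Matrix (Fin 3) (Fin 3) ℂ).trace = 1 by
        simp [Matrix.trace_diagonal, Fin.sum_univ_three]; norm_num] at h
      rw [heA]
      exact_mod_cast h
    have hsB : ∑ i, eigs (Matrix.diagonal ![0, 1/2, 1/2] : Matrix (Fin 3) (Fin 3) ℂ) i = 1 := by
      have h := sum_eigs_eq_trace hB
      rw [show (Matrix.diagonal ![0, 1/2, 1/2] : Matrix (Fin 3) (Fin 3) ℂ).trace = 1 by
        simp [Matrix.trace_diagonal, Fin.sum_univ_three]; norm_num] at h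
      rw [heB]
      exact_mod_cast h
    have hexA : ∃ i, eigs (Matrix.diagonal ![1/6, 1/6, 2/3] : Matrix (Fin 3) (Fin 3) ℂ) i = 2/3 := by
      by_contra hc
      push_neg at hc
      have hall : ∀ i, eigs (Matrix.diagonal ![1/6, 1/6, 2/3] : Matrix (Fin 3) (Fin 3) ℂ) i = 1/6 :=
        fun i => (hmA i).resolve_right (hc i)
      rw [Fin.sum_univ_three, hall 0, hall 1, hall 2] at hsA
      norm_num at hsA
    have hexB : ∃ i, eigs (Matrix.diagonal ![0, 1/2, 1/2] : Matrix (Fin 3) (Fin 3) ℂ) i = 1/2 := by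
      by_contra hc
      push_neg at hc
      have hall : ∀ i, eigs (Matrix.diagonal ![0, 1/2, 1/2] : Matrix (Fin 3) (Fin 3) ℂ) i = 0 :=
        fun i => (hmB i).resolve_right (hc i)
      rw [Fin.sum_univ_three, hall 0, hall 1, hall 2] at hsB
      norm_num at hsB
    have hsupA : (⨆ i, eigs (Matrix.diagonal ![1/6, 1/6, 2/3] : Matrix (Fin 3) (Fin 3) ℂ) i) = 2/3 := by
      obtain ⟨i0, hi0⟩ := hexA
      refine le_antisymm (ciSup_le fun i => ?_)
        (hi0 ▸ le_ciSup (Set.Finite.bddAbove (Set.finite_range _)) i0)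
      rcases hmA i with h | h <;> rw [h] <;> norm_num
    have hsupB : (⨆ i, eigs (Matrix.diagonal ![0, 1/2, 1/2] : Matrix (Fin 3) (Fin 3) ℂ) i) = 1/2 := by
      obtain ⟨i0, hi0⟩ := hexB
      refine le_antisymm (ciSup_le fun i => ?_)
        (hi0 ▸ le_ciSup (Set.Finite.bddAbove (Set.finite_range _)) i0)
      rcases hmB i with h | h <;> rw [h] <;> norm_num
    rw [Sinf, Sinf, hsupA, hsupB]
    exact neg_lt_neg (Real.log_lt_log (by norm_num) (by norm_num))
end
end

section
/- For every real α with α ∉ {0, 1}, the Rényi entropy S_α is not a monotone under correlating-catalytic transitions: there exist full-rank density matrices ρ, ρ' of the same finite dimension, a finite-dimensional density matrix σ, and a unitary U such that tr₂[U(ρ ⊗ σ)U†] = ρ', tr₁[U(ρ ⊗ σ)U†] = σ, and S_α(ρ') < S_α(ρ). -/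
open scoped Kronecker ComplexOrder
open Matrix

noncomputable section

/-- Rényi-`α` entropy `S_α(ρ) = (1/(1-α)) log tr(ρ^α)`, computed from the eigenvalues. -/
def renyi (α : ℝ) {ι : Type*} [Fintype ι] [DecidableEq ι] (ρ : Matrix ι ι ℂ) : ℝ :=
  (1 - α)⁻¹ * Real.log (∑ i, eigs ρ i ^ α)

/-! ### Auxiliary lemmas -/

open Polynomial in
lemma my_charpoly_diag {k : Type*} [Fintype k] [DecidableEq k] (c : k → ℂ) :
    (Matrix.diagonal c).charpoly = (Finset.univ.val.map (fun i => X - C (c i))).prod := by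
  rw [Matrix.charpoly]
  have h : charmatrix (Matrix.diagonal c) = Matrix.diagonal (fun i => X - C (c i)) := by
    ext i j
    by_cases h : i = j
    · subst h; simp
    · simp [charmatrix_apply_ne _ _ _ h, Matrix.diagonal_apply_ne _ h]
  rw [h, Matrix.det_diagonal]
  rfl

open Polynomial in
lemma my_roots_charpoly_diag {k : Type*} [Fintype k] [DecidableEq k] (c : k → ℂ) :
    (Matrix.diagonal c).charpoly.roots = Finset.univ.val.map c := by
  rw [my_charpoly_diag, show Finset.univ.val.map (fun i => X - C (c i))
      = (Finset.univ.val.map c).map (fun a => X - C a) by rw [Multiset.map_map]; rfl]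
  exact Polynomial.roots_multiset_prod_X_sub_C _

open Polynomial in
lemma my_charpoly_unitary_conj {k : Type*} [Fintype k] [DecidableEq k]
    (U M : Matrix k k ℂ) (hU : U ∈ Matrix.unitaryGroup k ℂ) :
    (U * M * star U).charpoly = M.charpoly := by
  have h1 : U * star U = 1 := Matrix.mem_unitaryGroup_iff.mp hU
  set V := star U with hV
  have hmap : (U.map C) * (V.map C) = 1 := by
    rw [← Matrix.map_mul, h1, Matrix.map_one _ (map_zero C) (map_one C)]
  have hcm : charmatrix (U * M * V) = (U.map C) * charmatrix M * (V.map C) := by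
    unfold charmatrix
    simp only [RingHom.mapMatrix_apply]
    rw [Matrix.mul_sub, Matrix.sub_mul, ← Matrix.map_mul, ← Matrix.map_mul]
    congr 1
    rw [← (Matrix.scalar_commute (X : ℂ[X]) (Commute.all X) (U.map C)).eq,
      mul_assoc, hmap, mul_one]
  rw [Matrix.charpoly, Matrix.charpoly, hcm, Matrix.det_mul, Matrix.det_mul]
  have hdet : (U.map C).det * (V.map C).det = 1 := by
    rw [← Matrix.det_mul, hmap, Matrix.det_one]
  calc (U.map C).det * (charmatrix M).det * (V.map C).det
      = ((U.map C).det * (V.map C).det) * (charmatrix M).det := by ring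
    _ = (charmatrix M).det := by rw [hdet, one_mul]

lemma my_sum_f_eigs_diagonal {k : Type*} [Fintype k] [DecidableEq k] (d : k → ℝ) (f : ℝ → ℝ) :
    ∑ i, f (eigs (Matrix.diagonal (fun i => (d i : ℂ))) i) = ∑ i, f (d i) := by
  have hH : (Matrix.diagonal (fun i => (d i : ℂ))).IsHermitian := by
    apply Matrix.isHermitian_diagonal_of_self_adjoint
    funext i
    simp [Pi.star_apply, Complex.conj_ofReal]
  rw [eigs, dif_pos hH]
  have hspec := hH.spectral_theorem
  have hmem := (hH.eigenvectorUnitary).2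
  have hchar : (Matrix.diagonal (fun i => (d i : ℂ))).charpoly
      = (Matrix.diagonal (RCLike.ofReal ∘ hH.eigenvalues : k → ℂ)).charpoly := by
    conv_lhs => rw [hspec]
    exact my_charpoly_unitary_conj _ _ hmem
  have hroots := congrArg Polynomial.roots hchar
  rw [my_roots_charpoly_diag, my_roots_charpoly_diag] at hroots
  have hms : Finset.univ.val.map d = Finset.univ.val.map hH.eigenvalues := by
    apply Multiset.map_injective Complex.ofReal_injective
    rw [Multiset.map_map, Multiset.map_map]
    convert hroots using 2 <;> rfl
  have hmf : (Finset.univ.val.map d).map f = (Finset.univ.val.map hH.eigenvalues).map f := by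
    rw [hms]
  rw [Multiset.map_map, Multiset.map_map] at hmf
  calc ∑ i, f (hH.eigenvalues i) = (Finset.univ.val.map (f ∘ hH.eigenvalues)).sum := rfl
    _ = (Finset.univ.val.map (f ∘ d)).sum := by rw [hmf]
    _ = ∑ i, f (d i) := rfl

lemma my_star_permMatrix {k : Type*} [Fintype k] [DecidableEq k] (e : Equiv.Perm k) :
    star (e.toPEquiv.toMatrix : Matrix k k ℂ) = (e.symm.toPEquiv.toMatrix : Matrix k k ℂ) := by
  ext i j
  simp only [Matrix.star_apply, PEquiv.toMatrix_apply, Equiv.toPEquiv_apply,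
    Option.mem_def, Option.some.injEq]
  by_cases h : e j = i
  · simp [h, (Equiv.symm_apply_eq e).mpr h.symm]
  · have h2 : ¬ (e.symm i = j) := fun hh => h (by rw [← hh]; simp)
    simp [h, h2]

lemma my_permMatrix_mem_unitaryGroup {k : Type*} [Fintype k] [DecidableEq k] (e : Equiv.Perm k) :
    (e.toPEquiv.toMatrix : Matrix k k ℂ) ∈ Matrix.unitaryGroup k ℂ := by
  rw [Matrix.mem_unitaryGroup_iff, my_star_permMatrix, ← PEquiv.toMatrix_trans,
    ← Equiv.toPEquiv_trans]
  simp

lemma my_permMatrix_conj_diagonal {k : Type*} [Fintype k] [DecidableEq k]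
    (e : Equiv.Perm k) (d : k → ℂ) :
    (e.toPEquiv.toMatrix : Matrix k k ℂ) * Matrix.diagonal d
        * star (e.toPEquiv.toMatrix : Matrix k k ℂ)
      = Matrix.diagonal (fun i => d (e i)) := by
  rw [my_star_permMatrix, PEquiv.toMatrix_toPEquiv_mul, PEquiv.mul_toMatrix_toPEquiv]
  ext i j
  by_cases h : i = j
  · subst h; simp
  · simp [Matrix.submatrix_apply, Matrix.diagonal_apply_ne _ h,
      Matrix.diagonal_apply_ne _ (fun hh => h (e.injective hh)), h]

lemma my_ptrace2_diagonal {ι κ : Type*} [Fintype κ] [DecidableEq ι] [DecidableEq κ]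
    (f : ι × κ → ℂ) :
    ptrace2 (Matrix.diagonal f) = Matrix.diagonal (fun i => ∑ k, f (i, k)) := by
  ext i j
  by_cases h : i = j
  · subst h; simp [ptrace2, Matrix.diagonal_apply]
  · simp [ptrace2, Matrix.diagonal_apply, h, Prod.ext_iff]

lemma my_ptrace1_diagonal {ι κ : Type*} [Fintype ι] [DecidableEq ι] [DecidableEq κ]
    (f : ι × κ → ℂ) :
    ptrace1 (Matrix.diagonal f) = Matrix.diagonal (fun k => ∑ i, f (i, k)) := by
  ext i j
  by_cases h : i = j
  · subst h; simp [ptrace1, Matrix.diagonal_apply]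
  · simp [ptrace1, Matrix.diagonal_apply, h, Prod.ext_iff]

lemma my_isDensityMatrix_diagonal {k : Type*} [Fintype k] [DecidableEq k]
    (d : k → ℝ) (hpos : ∀ i, 0 ≤ d i) (hsum : ∑ i, d i = 1) :
    IsDensityMatrix (Matrix.diagonal (fun i => (d i : ℂ))) := by
  constructor
  · exact Matrix.posSemidef_diagonal_iff.mpr fun i => Complex.zero_le_real.mpr (hpos i)
  · rw [Matrix.trace_diagonal, ← Complex.ofReal_sum, hsum, Complex.ofReal_one]

lemma my_rank_diagonal_full {k : ℕ} (d : Fin k → ℝ) (h : ∀ i, d i ≠ 0) :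
    (Matrix.diagonal (fun i => (d i : ℂ))).rank = k := by
  rw [Matrix.rank_diagonal]
  rw [Fintype.card_congr (Equiv.subtypeUnivEquiv
    (fun i => Complex.ofReal_ne_zero.mpr (h i)))]
  exact Fintype.card_fin k

/-- If `G` has negative derivative at `0` and `G 0 = 0`, then `G` takes negative values
just right of `0`. -/
lemma my_exists_neg_right {G : ℝ → ℝ} {D ε : ℝ}
    (h : HasDerivAt G D 0) (h0 : G 0 = 0) (hD : D < 0) (hε : 0 < ε) :
    ∃ t : ℝ, |t| < ε ∧ G t < 0 := by
  have hs := hasDerivAt_iff_tendsto_slope.mp h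
  have hev : ∀ᶠ t in nhdsWithin 0 {(0:ℝ)}ᶜ, slope G 0 t < 0 := hs.eventually_lt_const hD
  have hle : nhdsWithin (0:ℝ) (Set.Ioi 0) ≤ nhdsWithin 0 {(0:ℝ)}ᶜ :=
    nhdsWithin_mono _ (fun x hx => ne_of_gt hx)
  have hmem : Set.Ioo (0:ℝ) ε ∈ nhdsWithin (0:ℝ) (Set.Ioi 0) :=
    Ioo_mem_nhdsGT_of_mem ⟨le_refl 0, hε⟩
  obtain ⟨t, ht1, ht2⟩ := ((hev.filter_mono hle).and (Filter.eventually_of_mem hmem (fun x hx => hx))).exists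
  refine ⟨t, ?_, ?_⟩
  · rw [abs_lt]; exact ⟨by linarith [ht2.1], ht2.2⟩
  · rw [slope_def_field, h0, sub_zero, sub_zero] at ht1
    rcases div_neg_iff.mp ht1 with ⟨_, h2⟩ | ⟨h1, _⟩
    · linarith [ht2.1]
    · exact h1

/-- If `G` has negative derivative at `0` and `G 0 = 0`, then `G` takes positive values
just left of `0`. -/
lemma my_exists_pos_left {G : ℝ → ℝ} {D ε : ℝ}
    (h : HasDerivAt G D 0) (h0 : G 0 = 0) (hD : D < 0) (hε : 0 < ε) :
    ∃ t : ℝ, |t| < ε ∧ 0 < G t := by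
  have hs := hasDerivAt_iff_tendsto_slope.mp h
  have hev : ∀ᶠ t in nhdsWithin 0 {(0:ℝ)}ᶜ, slope G 0 t < 0 := hs.eventually_lt_const hD
  have hle : nhdsWithin (0:ℝ) (Set.Iio 0) ≤ nhdsWithin 0 {(0:ℝ)}ᶜ :=
    nhdsWithin_mono _ (fun x hx => ne_of_lt hx)
  have hmem : Set.Ioo (-ε) (0:ℝ) ∈ nhdsWithin (0:ℝ) (Set.Iio 0) :=
    Ioo_mem_nhdsLT_of_mem ⟨by linarith, le_refl 0⟩
  obtain ⟨t, ht1, ht2⟩ := ((hev.filter_mono hle).and (Filter.eventually_of_mem hmem (fun x hx => hx))).exists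
  refine ⟨t, ?_, ?_⟩
  · rw [abs_lt]; exact ⟨ht2.1, by linarith [ht2.2]⟩
  · rw [slope_def_field, h0, sub_zero, sub_zero] at ht1
    rcases div_neg_iff.mp ht1 with ⟨h1, _⟩ | ⟨_, h2⟩
    · exact h1
    · linarith [ht2.2]

set_option linter.unnecessarySeqFocus false in
lemma my_key (α : ℝ) (hα0 : α ≠ 0) (hα1 : α ≠ 1) :
    ∃ t : ℝ, |t| < 1/50 ∧
      (1 - α) * ((((5/21 + t) * (1/5 + 21/25*t)) ^ α
        + ((1/21 + t) * (1 - (1/5 + 21/25*t)) + (16/21 - t) * (1/5 + 21/25*t)) ^ α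
        + ((20/21 - t) * (1 - (1/5 + 21/25*t))) ^ α)
        - ((1/21 + t) ^ α + ((4:ℝ)/21) ^ α + (16/21 - t) ^ α)) < 0 := by
  have hβ0 : α - 1 ≠ 0 := sub_ne_zero.mpr hα1
  set G : ℝ → ℝ := fun t => (((5/21 + t) * (1/5 + 21/25*t)) ^ α
        + ((1/21 + t) * (1 - (1/5 + 21/25*t)) + (16/21 - t) * (1/5 + 21/25*t)) ^ α
        + ((20/21 - t) * (1 - (1/5 + 21/25*t))) ^ α)
        - ((1/21 + t) ^ α + ((4:ℝ)/21) ^ α + (16/21 - t) ^ α) with hGdef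
  have hG0 : G 0 = 0 := by
    rw [hGdef]
    norm_num
  have h1 : HasDerivAt (fun t : ℝ => 5/21 + t) 1 0 := by
    simpa using (hasDerivAt_id (0:ℝ)).const_add (5/21 : ℝ)
  have hu : HasDerivAt (fun t : ℝ => 1/5 + 21/25*t) (21/25) 0 := by
    simpa using ((hasDerivAt_id (0:ℝ)).const_mul (21/25 : ℝ)).const_add (1/5 : ℝ)
  have hv : HasDerivAt (fun t : ℝ => 1 - (1/5 + 21/25*t)) (-(21/25)) 0 := by
    simpa using hu.const_sub 1
  have ha : HasDerivAt (fun t : ℝ => 1/21 + t) 1 0 := by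
    simpa using (hasDerivAt_id (0:ℝ)).const_add (1/21 : ℝ)
  have hc : HasDerivAt (fun t : ℝ => 16/21 - t) (-1) 0 := by
    simpa using (hasDerivAt_id (0:ℝ)).const_sub (16/21 : ℝ)
  have hc2 : HasDerivAt (fun t : ℝ => 20/21 - t) (-1) 0 := by
    simpa using (hasDerivAt_id (0:ℝ)).const_sub (20/21 : ℝ)
  have hxin : HasDerivAt (fun t : ℝ => (5/21 + t) * (1/5 + 21/25*t)) (2/5) 0 := by
    have h := h1.fun_mul hu
    exact h.congr_deriv (by norm_num)
  have hyin : HasDerivAt (fun t : ℝ => (1/21 + t) * (1 - (1/5 + 21/25*t))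
      + (16/21 - t) * (1/5 + 21/25*t)) (6/5) 0 := by
    have h := (ha.fun_mul hv).fun_add (hc.fun_mul hu)
    exact h.congr_deriv (by norm_num)
  have hzin : HasDerivAt (fun t : ℝ => (20/21 - t) * (1 - (1/5 + 21/25*t))) (-8/5) 0 := by
    have h := hc2.fun_mul hv
    exact h.congr_deriv (by norm_num)
  have hX : HasDerivAt (fun t : ℝ => ((5/21 + t) * (1/5 + 21/25*t)) ^ α)
      ((2/5) * α * (1/21 : ℝ) ^ (α - 1)) 0 := by
    have h := hxin.rpow_const (p := α) (Or.inl (by norm_num))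
    convert h using 1 <;> norm_num
  have hY : HasDerivAt (fun t : ℝ => ((1/21 + t) * (1 - (1/5 + 21/25*t))
      + (16/21 - t) * (1/5 + 21/25*t)) ^ α) ((6/5) * α * ((4:ℝ)/21) ^ (α - 1)) 0 := by
    have h := hyin.rpow_const (p := α) (Or.inl (by norm_num))
    convert h using 1 <;> norm_num
  have hZ : HasDerivAt (fun t : ℝ => ((20/21 - t) * (1 - (1/5 + 21/25*t))) ^ α)
      ((-8/5) * α * ((16:ℝ)/21) ^ (α - 1)) 0 := by
    have h := hzin.rpow_const (p := α) (Or.inl (by norm_num))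
    convert h using 1 <;> norm_num
  have hA : HasDerivAt (fun t : ℝ => (1/21 + t) ^ α) (1 * α * (1/21 : ℝ) ^ (α - 1)) 0 := by
    have h := ha.rpow_const (p := α) (Or.inl (by norm_num))
    convert h using 1 <;> norm_num
  have hC : HasDerivAt (fun t : ℝ => (16/21 - t) ^ α)
      ((-1) * α * ((16:ℝ)/21) ^ (α - 1)) 0 := by
    have h := hc.rpow_const (p := α) (Or.inl (by norm_num))
    convert h using 1 <;> norm_num
  have hB : HasDerivAt (fun _ : ℝ => ((4:ℝ)/21) ^ α) 0 0 := hasDerivAt_const _ _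
  have hG' : HasDerivAt G
      (((2/5) * α * (1/21 : ℝ) ^ (α - 1) + (6/5) * α * ((4:ℝ)/21) ^ (α - 1)
        + (-8/5) * α * ((16:ℝ)/21) ^ (α - 1))
        - (1 * α * (1/21 : ℝ) ^ (α - 1) + 0 + (-1) * α * ((16:ℝ)/21) ^ (α - 1))) 0 := by
    rw [hGdef]
    exact ((hX.add hY).add hZ).sub ((hA.add hB).add hC)
  have h4 : ((4:ℝ)/21) ^ (α - 1) = (4:ℝ) ^ (α - 1) * (1/21 : ℝ) ^ (α - 1) := by
    rw [show (4:ℝ)/21 = 4 * (1/21) by norm_num,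
      Real.mul_rpow (by norm_num) (by norm_num)]
  have h16 : ((16:ℝ)/21) ^ (α - 1) = ((4:ℝ) ^ (α - 1)) ^ 2 * (1/21 : ℝ) ^ (α - 1) := by
    rw [show (16:ℝ)/21 = (4 * 4) * (1/21) by norm_num,
      Real.mul_rpow (by norm_num) (by norm_num),
      Real.mul_rpow (by norm_num) (by norm_num)]
    ring
  have hDeq : (((2/5) * α * (1/21 : ℝ) ^ (α - 1) + (6/5) * α * ((4:ℝ)/21) ^ (α - 1)
        + (-8/5) * α * ((16:ℝ)/21) ^ (α - 1))
        - (1 * α * (1/21 : ℝ) ^ (α - 1) + 0 + (-1) * α * ((16:ℝ)/21) ^ (α - 1)))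
      = -((3/5) * α * (1/21 : ℝ) ^ (α - 1) * ((4:ℝ) ^ (α - 1) - 1) ^ 2) := by
    rw [h4, h16]; ring
  rw [hDeq] at hG'
  have hApos : (0:ℝ) < (1/21 : ℝ) ^ (α - 1) := Real.rpow_pos_of_pos (by norm_num) _
  have hYne : (4:ℝ) ^ (α - 1) ≠ 1 := by
    intro h
    have hlog := congrArg Real.log h
    rw [Real.log_rpow (by norm_num), Real.log_one] at hlog
    have h4pos : (0:ℝ) < Real.log 4 := Real.log_pos (by norm_num)
    rcases mul_eq_zero.mp hlog with h' | h'
    · exact hβ0 h'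
    · linarith
  have hsq : (0:ℝ) < ((4:ℝ) ^ (α - 1) - 1) ^ 2 :=
    lt_of_le_of_ne (sq_nonneg _) (Ne.symm (pow_ne_zero _ (sub_ne_zero.mpr hYne)))
  rcases lt_trichotomy α 0 with hαneg | hα0' | hαpos
  · -- α < 0 : derivative positive, need G t < 0, take left side of -G
    have hpos : 0 < (3/5) * (-α) * (1/21 : ℝ) ^ (α - 1) * ((4:ℝ) ^ (α - 1) - 1) ^ 2 :=
      mul_pos (mul_pos (mul_pos (by norm_num) (by linarith)) hApos) hsq
    have hGneg : HasDerivAt (fun t => -(G t))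
        (-(-((3/5) * α * (1/21 : ℝ) ^ (α - 1) * ((4:ℝ) ^ (α - 1) - 1) ^ 2))) 0 := hG'.neg
    have hDneg : -(-((3/5) * α * (1/21 : ℝ) ^ (α - 1) * ((4:ℝ) ^ (α - 1) - 1) ^ 2)) < 0 := by
      nlinarith [hpos]
    obtain ⟨t, htb, htpos⟩ := my_exists_pos_left hGneg (by simp [hG0]) hDneg
      (by norm_num : (0:ℝ) < 1/50)
    refine ⟨t, htb, ?_⟩
    show (1 - α) * G t < 0
    exact mul_neg_of_pos_of_neg (by linarith) (by linarith)
  · exact absurd hα0' hα0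
  · have hDneg : -((3/5) * α * (1/21 : ℝ) ^ (α - 1) * ((4:ℝ) ^ (α - 1) - 1) ^ 2) < 0 := by
      have hpos : 0 < (3/5) * α * (1/21 : ℝ) ^ (α - 1) * ((4:ℝ) ^ (α - 1) - 1) ^ 2 :=
        mul_pos (mul_pos (mul_pos (by norm_num) hαpos) hApos) hsq
      linarith
    rcases lt_or_gt_of_ne hα1 with hlt | hgt
    · obtain ⟨t, htb, htneg⟩ := my_exists_neg_right hG' hG0 hDneg
        (by norm_num : (0:ℝ) < 1/50)
      refine ⟨t, htb, ?_⟩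
      show (1 - α) * G t < 0
      exact mul_neg_of_pos_of_neg (by linarith) htneg
    · obtain ⟨t, htb, htpos⟩ := my_exists_pos_left hG' hG0 hDneg
        (by norm_num : (0:ℝ) < 1/50)
      refine ⟨t, htb, ?_⟩
      show (1 - α) * G t < 0
      exact mul_neg_of_neg_of_pos (by linarith) htpos


def myf : Fin 3 × Fin 2 → Fin 3 × Fin 2 := fun x =>
  ![![((0 : Fin 3), (0 : Fin 2)), ((1 : Fin 3), (0 : Fin 2))],
    ![((0 : Fin 3), (1 : Fin 2)), ((2 : Fin 3), (0 : Fin 2))],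
    ![((1 : Fin 3), (1 : Fin 2)), ((2 : Fin 3), (1 : Fin 2))]] x.1 x.2

def mye : Equiv.Perm (Fin 3 × Fin 2) := ⟨myf, myf, by decide, by decide⟩

@[simp] lemma mye_apply (x : Fin 3 × Fin 2) : mye x = myf x := rfl

set_option maxHeartbeats 2000000 in
/-- For every `α ∉ {0,1}`, the Rényi entropy `S_α` is not a monotone under
correlating-catalytic transitions: there is such a transition between full-rank density
matrices that strictly decreases `S_α`. -/
theorem stmt15 (α : ℝ) (hα0 : α ≠ 0) (hα1 : α ≠ 1) :
    ∃ (n : ℕ) (ρ ρ' : Matrix (Fin n) (Fin n) ℂ),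
      IsDensityMatrix ρ ∧ IsDensityMatrix ρ' ∧ ρ.rank = n ∧ ρ'.rank = n ∧
      (∃ (m : ℕ) (σ : Matrix (Fin m) (Fin m) ℂ),
        IsDensityMatrix σ ∧
        ∃ U ∈ Matrix.unitaryGroup (Fin n × Fin m) ℂ,
          ptrace2 (U * (ρ ⊗ₖ σ) * Uᴴ) = ρ' ∧
          ptrace1 (U * (ρ ⊗ₖ σ) * Uᴴ) = σ) ∧
      renyi α ρ' < renyi α ρ := by
  obtain ⟨t, htb, hkey⟩ := my_key α hα0 hα1
  obtain ⟨htl, htr⟩ := abs_lt.mp htb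
  set pv : Fin 3 → ℝ := ![1/21 + t, 4/21, 16/21 - t] with hpv
  set qv : Fin 2 → ℝ := ![1/5 + 21/25*t, 1 - (1/5 + 21/25*t)] with hqv
  set wv : Fin 3 → ℝ := ![(5/21 + t) * (1/5 + 21/25*t),
     (1/21 + t) * (1 - (1/5 + 21/25*t)) + (16/21 - t) * (1/5 + 21/25*t),
     (20/21 - t) * (1 - (1/5 + 21/25*t))] with hwv
  have hq0 : 0 < 1/5 + 21/25*t := by linarith
  have hq1 : 0 < 1 - (1/5 + 21/25*t) := by linarith
  have hp0 : 0 < 1/21 + t := by linarith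
  have hp2 : 0 < 16/21 - t := by linarith
  have h5 : 0 < 5/21 + t := by linarith
  have h20 : 0 < 20/21 - t := by linarith
  have hpvpos : ∀ i, 0 < pv i := by
    intro i; fin_cases i <;> simp [hpv] <;> linarith
  have hqvpos : ∀ i, 0 < qv i := by
    intro i; fin_cases i <;> simp [hqv] <;> linarith
  have hwvpos : ∀ i, 0 < wv i := by
    intro i; fin_cases i
    · simpa [hwv] using mul_pos h5 hq0
    · simpa [hwv] using add_pos (mul_pos hp0 hq1) (mul_pos hp2 hq0)
    · simpa [hwv] using mul_pos h20 hq1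
  refine ⟨3, Matrix.diagonal (fun i => (pv i : ℂ)), Matrix.diagonal (fun i => (wv i : ℂ)),
    ?_, ?_, ?_, ?_, ?_, ?_⟩
  · exact my_isDensityMatrix_diagonal pv (fun i => (hpvpos i).le)
      (by simp [hpv, Fin.sum_univ_three]; ring)
  · exact my_isDensityMatrix_diagonal wv (fun i => (hwvpos i).le)
      (by simp [hwv, Fin.sum_univ_three]; ring)
  · exact my_rank_diagonal_full pv (fun i => (hpvpos i).ne')
  · exact my_rank_diagonal_full wv (fun i => (hwvpos i).ne')
  · refine ⟨2, Matrix.diagonal (fun k => (qv k : ℂ)), ?_, ?_⟩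
    · exact my_isDensityMatrix_diagonal qv (fun i => (hqvpos i).le)
        (by simp [hqv, Fin.sum_univ_two])
    · refine ⟨(mye.toPEquiv.toMatrix : Matrix (Fin 3 × Fin 2) (Fin 3 × Fin 2) ℂ),
        my_permMatrix_mem_unitaryGroup mye, ?_, ?_⟩
      · -- ptrace2
        rw [← Matrix.star_eq_conjTranspose, Matrix.diagonal_kronecker_diagonal,
          my_permMatrix_conj_diagonal, my_ptrace2_diagonal]
        have hfun2 : (fun i : Fin 3 => ∑ k : Fin 2,
            ((fun ik : Fin 3 × Fin 2 => (pv ik.1 : ℂ) * (qv ik.2 : ℂ)) (mye (i, k))))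
            = (fun i => (wv i : ℂ)) := by
          funext i
          fin_cases i <;>
            · simp [Fin.sum_univ_two, mye_apply, myf, hpv, hqv, hwv]
              try norm_cast
              try ring
        exact congrArg Matrix.diagonal hfun2
      · -- ptrace1
        rw [← Matrix.star_eq_conjTranspose, Matrix.diagonal_kronecker_diagonal,
          my_permMatrix_conj_diagonal, my_ptrace1_diagonal]
        have hfun1 : (fun k : Fin 2 => ∑ i : Fin 3,
            ((fun ik : Fin 3 × Fin 2 => (pv ik.1 : ℂ) * (qv ik.2 : ℂ)) (mye (i, k))))
            = (fun k => (qv k : ℂ)) := by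
          funext k
          fin_cases k <;>
            · simp [Fin.sum_univ_three, mye_apply, myf, hpv, hqv]
              try norm_cast
              try ring
        exact congrArg Matrix.diagonal hfun1
  · -- Rényi entropy strictly decreases
    have hsumP : ∑ i, eigs (Matrix.diagonal (fun i => (pv i : ℂ))) i ^ α
        = (1/21 + t) ^ α + ((4:ℝ)/21) ^ α + (16/21 - t) ^ α := by
      have h := my_sum_f_eigs_diagonal pv (fun r => r ^ α)
      simpa [hpv, Fin.sum_univ_three] using h
    have hsumW : ∑ i, eigs (Matrix.diagonal (fun i => (wv i : ℂ))) i ^ α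
        = ((5/21 + t) * (1/5 + 21/25*t)) ^ α
          + ((1/21 + t) * (1 - (1/5 + 21/25*t)) + (16/21 - t) * (1/5 + 21/25*t)) ^ α
          + ((20/21 - t) * (1 - (1/5 + 21/25*t))) ^ α := by
      have h := my_sum_f_eigs_diagonal wv (fun r => r ^ α)
      simpa [hwv, Fin.sum_univ_three] using h
    rw [renyi, renyi, hsumP, hsumW]
    have hSW : 0 < ((5/21 + t) * (1/5 + 21/25*t)) ^ α
          + ((1/21 + t) * (1 - (1/5 + 21/25*t)) + (16/21 - t) * (1/5 + 21/25*t)) ^ α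
          + ((20/21 - t) * (1 - (1/5 + 21/25*t))) ^ α := by
      have h1 := Real.rpow_pos_of_pos (mul_pos h5 hq0) α
      have h2 := Real.rpow_pos_of_pos (add_pos (mul_pos hp0 hq1) (mul_pos hp2 hq0)) α
      have h3 := Real.rpow_pos_of_pos (mul_pos h20 hq1) α
      linarith
    have hSP : 0 < (1/21 + t) ^ α + ((4:ℝ)/21) ^ α + (16/21 - t) ^ α := by
      have h1 := Real.rpow_pos_of_pos hp0 α
      have h2 := Real.rpow_pos_of_pos (by norm_num : (0:ℝ) < 4/21) α
      have h3 := Real.rpow_pos_of_pos hp2 α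
      linarith
    rcases lt_or_gt_of_ne hα1 with hlt | hgt
    · have h1α : 0 < 1 - α := by linarith
      have hdiff : (((5/21 + t) * (1/5 + 21/25*t)) ^ α
          + ((1/21 + t) * (1 - (1/5 + 21/25*t)) + (16/21 - t) * (1/5 + 21/25*t)) ^ α
          + ((20/21 - t) * (1 - (1/5 + 21/25*t))) ^ α)
          < (1/21 + t) ^ α + ((4:ℝ)/21) ^ α + (16/21 - t) ^ α := by
        rcases mul_neg_iff.mp hkey with ⟨_, h2⟩ | ⟨h1, _⟩
        · linarith
        · linarith
      exact mul_lt_mul_of_pos_left (Real.log_lt_log hSW hdiff) (inv_pos.mpr h1α)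
    · have h1α : 1 - α < 0 := by linarith
      have hdiff : ((1/21 + t) ^ α + ((4:ℝ)/21) ^ α + (16/21 - t) ^ α)
          < ((5/21 + t) * (1/5 + 21/25*t)) ^ α
          + ((1/21 + t) * (1 - (1/5 + 21/25*t)) + (16/21 - t) * (1/5 + 21/25*t)) ^ α
          + ((20/21 - t) * (1 - (1/5 + 21/25*t))) ^ α := by
        rcases mul_neg_iff.mp hkey with ⟨h1, _⟩ | ⟨_, h2⟩
        · linarith
        · linarith
      exact mul_lt_mul_of_neg_left (Real.log_lt_log hSP hdiff) (inv_lt_zero.mpr (by linarith))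
end
end
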